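/- arXiv:2202.09643 — 3 statements merged into one kernel-verified Lean document; each statement's English description precedes it below -/
import Mathlib

section
/- Let S be the polynomial ring over a field K in variables x_{ij}, (i,j) ∈ V, for a finite set V ⊂ ℕ², and let I be the ideal generated by the 2-minors x_{i1 j1} x_{i2 j2} − x_{i1 j2} x_{i2 j1} of all inner intervals of a polyomino P with vertex set V. In the localization S_x at the product x of all variables, the extended ideal I·S_x is generated by the 2-minors corresponding to the cells of P. -/
open MvPolynomial

/-- A cell of `ℕ²` is identified with its lower-left corner `a`; it is the
interval `[a, a+(1,1)]`. -/
abbrev Cell := ℕ × ℕ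

/-- Two cells are adjacent if they share an edge. -/
def CellAdj (c d : Cell) : Prop :=
  (c.1 = d.1 ∧ (c.2 + 1 = d.2 ∨ d.2 + 1 = c.2)) ∨
  (c.2 = d.2 ∧ (c.1 + 1 = d.1 ∨ d.1 + 1 = c.1))

/-- A polyomino: a nonempty finite collection of cells, any two of which are
connected by a path of edge-adjacent cells inside the collection. -/
def IsPolyomino (P : Finset Cell) : Prop :=
  P.Nonempty ∧ ∀ c ∈ P, ∀ d ∈ P,
    Relation.ReflTransGen (fun x y => x ∈ P ∧ y ∈ P ∧ CellAdj x y) c d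

/-- The four vertices of the cell with lower-left corner `c`. -/
def cellVertices (c : Cell) : Finset (ℕ × ℕ) :=
  {c, (c.1 + 1, c.2), (c.1, c.2 + 1), (c.1 + 1, c.2 + 1)}

/-- The vertex set `V(P)` of a collection of cells. -/
def vertexSet (P : Finset Cell) : Finset (ℕ × ℕ) :=
  P.biUnion cellVertices

/-- `[(i1,j1),(i2,j2)]` is an inner interval of `P`: it is a proper interval and
every cell contained in it belongs to `P`. -/
def IsInnerInterval (P : Finset Cell) (i1 j1 i2 j2 : ℕ) : Prop :=
  i1 < i2 ∧ j1 < j2 ∧ ∀ i j : ℕ, i1 ≤ i → i < i2 → j1 ≤ j → j < j2 → (i, j) ∈ P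

/-- The set of inner 2-minors of `P` in `S = K[x_v : v ∈ V(P)]`. -/
def innerMinors (K : Type*) [Field K] (P : Finset Cell) :
    Set (MvPolynomial {v : ℕ × ℕ // v ∈ vertexSet P} K) :=
  { f | ∃ i1 j1 i2 j2, IsInnerInterval P i1 j1 i2 j2 ∧
      ∃ (ha : (i1, j1) ∈ vertexSet P) (hb : (i2, j2) ∈ vertexSet P)
        (hc : (i1, j2) ∈ vertexSet P) (hd : (i2, j1) ∈ vertexSet P),
        f = X ⟨(i1, j1), ha⟩ * X ⟨(i2, j2), hb⟩ - X ⟨(i1, j2), hc⟩ * X ⟨(i2, j1), hd⟩ }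

/-- The 2-minors corresponding to the cells of `P`. -/
def cellMinors (K : Type*) [Field K] (P : Finset Cell) :
    Set (MvPolynomial {v : ℕ × ℕ // v ∈ vertexSet P} K) :=
  { f | ∃ c ∈ P,
      ∃ (ha : (c.1, c.2) ∈ vertexSet P) (hb : (c.1 + 1, c.2 + 1) ∈ vertexSet P)
        (hc : (c.1, c.2 + 1) ∈ vertexSet P) (hd : (c.1 + 1, c.2) ∈ vertexSet P),
        f = X ⟨(c.1, c.2), ha⟩ * X ⟨(c.1 + 1, c.2 + 1), hb⟩
          - X ⟨(c.1, c.2 + 1), hc⟩ * X ⟨(c.1 + 1, c.2), hd⟩ }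


section Aux

lemma vertex_mem (P : Finset Cell) {i1 j1 i2 j2 : ℕ}
    (h : IsInnerInterval P i1 j1 i2 j2) {i j : ℕ}
    (hi1 : i1 ≤ i) (hi2 : i ≤ i2) (hj1 : j1 ≤ j) (hj2 : j ≤ j2) :
    (i, j) ∈ vertexSet P := by
  obtain ⟨hlt1, hlt2, hcell⟩ := h
  obtain ⟨i', hi, hi1', hi2'⟩ : ∃ i', (i = i' ∨ i = i' + 1) ∧ i1 ≤ i' ∧ i' < i2 :=
    ⟨if i < i2 then i else i2 - 1, by split <;> omega, by split <;> omega, by split <;> omega⟩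
  obtain ⟨j', hj, hj1', hj2'⟩ : ∃ j', (j = j' ∨ j = j' + 1) ∧ j1 ≤ j' ∧ j' < j2 :=
    ⟨if j < j2 then j else j2 - 1, by split <;> omega, by split <;> omega, by split <;> omega⟩
  refine Finset.mem_biUnion.2 ⟨(i', j'), hcell i' j' hi1' hi2' hj1' hj2', ?_⟩
  simp only [cellVertices, Finset.mem_insert, Finset.mem_singleton, Prod.ext_iff]
  rcases hi with h1 | h1 <;> rcases hj with h2 | h2 <;> simp [h1, h2]

variable {K : Type*} [Field K] (P : Finset Cell)

local notation "L" => Localization.Away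
    (∏ v : {v : ℕ × ℕ // v ∈ vertexSet P}, (X v : MvPolynomial _ K))

lemma isUnit_X (v : {v : ℕ × ℕ // v ∈ vertexSet P}) :
    IsUnit ((algebraMap (MvPolynomial {v : ℕ × ℕ // v ∈ vertexSet P} K) L) (X v)) :=
  IsLocalization.Away.isUnit_of_dvd _ (Finset.dvd_prod_of_mem _ (Finset.mem_univ v))

lemma key : ∀ n, ∀ i1 j1 i2 j2 : ℕ, (i2 - i1) + (j2 - j1) ≤ n →
    IsInnerInterval P i1 j1 i2 j2 →
    ∀ (ha : (i1, j1) ∈ vertexSet P) (hb : (i2, j2) ∈ vertexSet P)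
      (hc : (i1, j2) ∈ vertexSet P) (hd : (i2, j1) ∈ vertexSet P),
      (algebraMap (MvPolynomial {v : ℕ × ℕ // v ∈ vertexSet P} K) L)
          (X ⟨(i1, j1), ha⟩ * X ⟨(i2, j2), hb⟩ - X ⟨(i1, j2), hc⟩ * X ⟨(i2, j1), hd⟩)
        ∈ Ideal.span
            ((algebraMap (MvPolynomial {v : ℕ × ℕ // v ∈ vertexSet P} K) L) ''
              cellMinors K P) := by
  intro n
  induction n with
  | zero =>
    intro i1 j1 i2 j2 hn h ha hb hc hd
    exact absurd hn (by have := h.1; omega)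
  | succ n ih =>
    intro i1 j1 i2 j2 hn h ha hb hc hd
    obtain ⟨h1, h2, hcell⟩ := h
    set φ := algebraMap (MvPolynomial {v : ℕ × ℕ // v ∈ vertexSet P} K) L with hφ
    by_cases hi : i1 + 1 < i2
    · -- split at column k = i1 + 1
      set k := i1 + 1 with hk
      have hIL : IsInnerInterval P i1 j1 k j2 :=
        ⟨by omega, h2, fun i j a b c d => hcell i j a (by omega) c d⟩
      have hIR : IsInnerInterval P k j1 i2 j2 :=
        ⟨by omega, h2, fun i j a b c d => hcell i j (by omega) b c d⟩
      have hE : (k, j1) ∈ vertexSet P := vertex_mem P hIL (by omega) (by omega) (by omega) (by omega)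
      have hF : (k, j2) ∈ vertexSet P := vertex_mem P hIL (by omega) (by omega) (by omega) (by omega)
      have m1 := ih i1 j1 k j2 (by omega) hIL ha hF hc hE
      have m2 := ih k j1 i2 j2 (by omega) hIR hE hb hF hd
      have key_id :
          X (⟨(k, j1), hE⟩ : {v : ℕ × ℕ // v ∈ vertexSet P}) *
              (X ⟨(i1, j1), ha⟩ * X ⟨(i2, j2), hb⟩ - X ⟨(i1, j2), hc⟩ * X ⟨(i2, j1), hd⟩) =
            X ⟨(i1, j1), ha⟩ *
                (X ⟨(k, j1), hE⟩ * X ⟨(i2, j2), hb⟩ - X ⟨(k, j2), hF⟩ * X ⟨(i2, j1), hd⟩) +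
              (X ⟨(i2, j1), hd⟩ : MvPolynomial {v : ℕ × ℕ // v ∈ vertexSet P} K) *
                (X ⟨(i1, j1), ha⟩ * X ⟨(k, j2), hF⟩ - X ⟨(i1, j2), hc⟩ * X ⟨(k, j1), hE⟩) := by
        ring
      have hmem : φ (X (⟨(k, j1), hE⟩ : {v : ℕ × ℕ // v ∈ vertexSet P})) *
          φ (X ⟨(i1, j1), ha⟩ * X ⟨(i2, j2), hb⟩ - X ⟨(i1, j2), hc⟩ * X ⟨(i2, j1), hd⟩) ∈
          Ideal.span (φ '' cellMinors K P) := by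
        rw [← map_mul, key_id, map_add, map_mul, map_mul]
        exact Ideal.add_mem _ (Ideal.mul_mem_left _ _ m2) (Ideal.mul_mem_left _ _ m1)
      exact (Ideal.unit_mul_mem_iff_mem _ (isUnit_X P _)).1 hmem
    · by_cases hj : j1 + 1 < j2
      · -- split at row l = j1 + 1
        set l := j1 + 1 with hl
        have hIB : IsInnerInterval P i1 j1 i2 l :=
          ⟨h1, by omega, fun i j a b c d => hcell i j a b c (by omega)⟩
        have hIT : IsInnerInterval P i1 l i2 j2 :=
          ⟨h1, by omega, fun i j a b c d => hcell i j a b (by omega) d⟩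
        have hE : (i1, l) ∈ vertexSet P := vertex_mem P hIB (by omega) (by omega) (by omega) (by omega)
        have hF : (i2, l) ∈ vertexSet P := vertex_mem P hIB (by omega) (by omega) (by omega) (by omega)
        have m1 := ih i1 j1 i2 l (by omega) hIB ha hF hE hd
        have m2 := ih i1 l i2 j2 (by omega) hIT hE hb hc hF
        have key_id :
            X (⟨(i1, l), hE⟩ : {v : ℕ × ℕ // v ∈ vertexSet P}) *
                (X ⟨(i1, j1), ha⟩ * X ⟨(i2, j2), hb⟩ - X ⟨(i1, j2), hc⟩ * X ⟨(i2, j1), hd⟩) =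
              X ⟨(i1, j1), ha⟩ *
                  (X ⟨(i1, l), hE⟩ * X ⟨(i2, j2), hb⟩ - X ⟨(i1, j2), hc⟩ * X ⟨(i2, l), hF⟩) +
                (X ⟨(i1, j2), hc⟩ : MvPolynomial {v : ℕ × ℕ // v ∈ vertexSet P} K) *
                  (X ⟨(i1, j1), ha⟩ * X ⟨(i2, l), hF⟩ - X ⟨(i1, l), hE⟩ * X ⟨(i2, j1), hd⟩) := by
          ring
        have hmem : φ (X (⟨(i1, l), hE⟩ : {v : ℕ × ℕ // v ∈ vertexSet P})) *
            φ (X ⟨(i1, j1), ha⟩ * X ⟨(i2, j2), hb⟩ - X ⟨(i1, j2), hc⟩ * X ⟨(i2, j1), hd⟩) ∈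
            Ideal.span (φ '' cellMinors K P) := by
          rw [← map_mul, key_id, map_add, map_mul, map_mul]
          exact Ideal.add_mem _ (Ideal.mul_mem_left _ _ m2) (Ideal.mul_mem_left _ _ m1)
        exact (Ideal.unit_mul_mem_iff_mem _ (isUnit_X P _)).1 hmem
      · -- base case: a single cell
        have hi2 : i2 = i1 + 1 := by omega
        have hj2 : j2 = j1 + 1 := by omega
        subst hi2 hj2
        have hcP : ((i1, j1) : Cell) ∈ P := hcell i1 j1 le_rfl (by omega) le_rfl (by omega)
        refine Ideal.subset_span ⟨_, ⟨(i1, j1), hcP, ha, hb, hc, hd, rfl⟩, rfl⟩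

end Aux

/-- In the localization of `S = K[x_v : v ∈ V(P)]` at the product of all variables,
the extension of the polyomino ideal `I_P` is generated by the 2-minors of the
cells of `P`. -/
theorem stmt_8 {K : Type*} [Field K] (P : Finset Cell) (hP : IsPolyomino P) :
    Ideal.map
        (algebraMap (MvPolynomial {v : ℕ × ℕ // v ∈ vertexSet P} K)
          (Localization.Away (∏ v : {v : ℕ × ℕ // v ∈ vertexSet P}, (X v : MvPolynomial _ K))))
        (Ideal.span (innerMinors K P)) =
      Ideal.span
        ((algebraMap (MvPolynomial {v : ℕ × ℕ // v ∈ vertexSet P} K)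
          (Localization.Away (∏ v : {v : ℕ × ℕ // v ∈ vertexSet P}, (X v : MvPolynomial _ K)))) ''
          cellMinors K P) := by
  apply le_antisymm
  · rw [Ideal.map_span, Ideal.span_le]
    rintro _ ⟨f, ⟨i1, j1, i2, j2, hI, ha, hb, hc, hd, rfl⟩, rfl⟩
    exact key P ((i2 - i1) + (j2 - j1)) i1 j1 i2 j2 le_rfl hI ha hb hc hd
  · rw [Ideal.span_le]
    rintro _ ⟨f, ⟨c, hcP, ha, hb, hc, hd, rfl⟩, rfl⟩
    apply Ideal.mem_map_of_mem
    apply Ideal.subset_span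
    refine ⟨c.1, c.2, c.1 + 1, c.2 + 1, ⟨by omega, by omega, ?_⟩, ha, hb, hc, hd, rfl⟩
    intro i j h1 h2 h3 h4
    have : i = c.1 ∧ j = c.2 := by omega
    obtain ⟨rfl, rfl⟩ := this
    exact hcP
end

section
/- Let P be a polyomino and I_P ⊂ S = K[x_v : v ∈ V(P)] its polyomino ideal (generated by all inner 2-minors). If each variable x_v is a non-zerodivisor modulo I_P, then the height of I_P is at most the number of cells of P. -/
open MvPolynomial

/-- The (Krull) height of an ideal: the infimum of the heights of the primes
containing it, in the prime spectrum ordered by inclusion. -/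
noncomputable def idealHeight {R : Type*} [CommRing R] (I : Ideal R) : ℕ∞ :=
  ⨅ (p : PrimeSpectrum R) (_ : I ≤ p.asIdeal), Order.height p


section ArtinianAux

variable {R : Type*} [CommRing R]

theorem isArtinian_of_fg_of_isTorsionBySet {M : Type*} [AddCommGroup M] [Module R M]
    (m : Ideal R) [m.IsMaximal] [Module.Finite R M]
    (tor : Module.IsTorsionBySet R M (m : Set R)) : IsArtinian R M := by
  letI := tor.module
  letI := Ideal.Quotient.field m
  haveI : IsScalarTower R (R ⧸ m) M := tor.isScalarTower
  haveI : Module.Finite (R ⧸ m) M := Module.Finite.of_restrictScalars_finite R (R ⧸ m) M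
  haveI key : IsArtinian (R ⧸ m) M := isArtinian_of_fg_of_artinian'
  let e : Submodule R M ↪o Submodule (R ⧸ m) M :=
    { toFun := fun N =>
        { carrier := N
          add_mem' := fun h1 h2 => N.add_mem h1 h2
          zero_mem' := N.zero_mem
          smul_mem' := by
            intro c x hx
            obtain ⟨r, rfl⟩ := Ideal.Quotient.mk_surjective c
            rw [tor.mk_smul]
            exact N.smul_mem r hx }
      inj' := by
        intro N N' h
        ext x
        exact SetLike.ext_iff.mp h x
      map_rel_iff' := by
        intro N N'
        exact ⟨fun h x hx => h hx, fun h x hx => h hx⟩ }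
  exact ⟨e.wellFounded key.wf⟩

theorem isArtinian_quotient_pow [IsNoetherianRing R] (m : Ideal R) [m.IsMaximal] :
    ∀ k : ℕ, IsArtinian R (R ⧸ (m ^ k : Ideal R))
  | 0 => by
    haveI : Subsingleton (R ⧸ (m ^ 0 : Ideal R)) :=
      Ideal.Quotient.subsingleton_iff.mpr (by rw [pow_zero, Ideal.one_eq_top])
    haveI : Finite (R ⧸ (m ^ 0 : Ideal R)) := Finite.of_subsingleton
    exact isArtinian_of_finite
  | (k + 1) => by
    haveI ih := isArtinian_quotient_pow m k
    have hle : (m ^ (k + 1) : Ideal R) ≤ m ^ k := Ideal.pow_le_pow_right (Nat.le_succ k)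
    let g : (R ⧸ (m ^ (k + 1) : Ideal R)) →ₗ[R] (R ⧸ (m ^ k : Ideal R)) :=
      Submodule.mapQ _ _ LinearMap.id (by simpa using hle)
    have hg : ∀ x : R, g (Submodule.Quotient.mk x) = Submodule.Quotient.mk x := fun x =>
      Submodule.mapQ_apply _ _ _ x
    have hker : ∀ y : R, (Submodule.Quotient.mk y : R ⧸ (m ^ (k + 1) : Ideal R)) ∈
        LinearMap.ker g ↔ y ∈ (m ^ k : Ideal R) := by
      intro y
      rw [LinearMap.mem_ker, hg]
      exact Submodule.Quotient.mk_eq_zero _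
    set N := LinearMap.ker g with hN
    haveI : Module.Finite R N := by
      rw [Module.Finite.iff_fg]
      exact IsNoetherian.noetherian N
    have tor : Module.IsTorsionBySet R N (m : Set R) := by
      rintro ⟨x, hx⟩ ⟨a, ha⟩
      obtain ⟨y, rfl⟩ := Submodule.Quotient.mk_surjective _ x
      have hy : y ∈ (m ^ k : Ideal R) := (hker y).mp hx
      apply Subtype.ext
      show a • (Submodule.Quotient.mk y : R ⧸ (m ^ (k + 1) : Ideal R)) = 0
      rw [← Submodule.Quotient.mk_smul]
      refine (Submodule.Quotient.mk_eq_zero _).mpr ?_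
      show a • y ∈ (m ^ (k + 1) : Ideal R)
      rw [smul_eq_mul]
      rw [pow_succ]
      exact mul_comm a y ▸ Ideal.mul_mem_mul hy ha
    haveI : IsArtinian R N := isArtinian_of_fg_of_isTorsionBySet m tor
    exact isArtinian_of_range_eq_ker N.subtype g (Submodule.range_subtype N)

theorem exists_antitone_pause [IsNoetherianRing R] {m : Ideal R} [m.IsMaximal] {k : ℕ}
    (I : ℕ → Ideal R) (hanti : ∀ n, I (n + 1) ≤ I n) (hpow : ∀ n, m ^ k ≤ I n) :
    ∃ N, I N ≤ I (N + 1) := by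
  haveI hart := isArtinian_quotient_pow m k
  let π := Submodule.mkQ (m ^ k : Ideal R)
  let J : ℕ → Submodule R (R ⧸ (m ^ k : Ideal R)) := fun n => Submodule.map π (I n)
  obtain ⟨a, ⟨n0, rfl⟩, hmin⟩ := (IsWellFounded.wf (r := (· < ·))).has_min
    (Set.range J) ⟨J 0, ⟨0, rfl⟩⟩
  refine ⟨n0, ?_⟩
  have hle : J (n0 + 1) ≤ J n0 := Submodule.map_mono (hanti n0)
  have heq : J (n0 + 1) = J n0 :=
    (lt_or_eq_of_le hle).resolve_left (fun h => hmin _ ⟨n0 + 1, rfl⟩ h)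
  have hcm : ∀ n, Submodule.comap π (J n) = I n := by
    intro n
    rw [Submodule.comap_map_mkQ]
    exact sup_eq_right.mpr (hpow n)
  rw [← hcm n0, ← hcm (n0 + 1), heq]

end ArtinianAux

section PIT

variable {R : Type*} [CommRing R]

theorem mem_symbPow {q : Ideal R} [q.IsPrime] {n : ℕ} {x : R} :
    x ∈ (Ideal.comap (algebraMap R (Localization.AtPrime q))
        (Ideal.map (algebraMap R (Localization.AtPrime q)) (q ^ n)))
      ↔ ∃ s, s ∉ q ∧ s * x ∈ q ^ n := by
  rw [Ideal.mem_comap, IsLocalization.mem_map_algebraMap_iff q.primeCompl]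
  constructor
  · rintro ⟨⟨⟨a, ha⟩, ⟨s, hs⟩⟩, h⟩
    simp only at h
    rw [← map_mul] at h
    obtain ⟨c, hc⟩ := (IsLocalization.eq_iff_exists q.primeCompl _).mp h
    refine ⟨c * s, fun hmem => ?_, ?_⟩
    · rcases (Ideal.IsPrime.mem_or_mem ‹q.IsPrime› hmem) with h1 | h1
      · exact c.2 h1
      · exact hs h1
    · have : ↑c * (x * s) = ↑c * a := hc
      have h2 : (↑c : R) * a ∈ q ^ n := Ideal.mul_mem_left _ _ ha
      have heq : ↑c * s * x = ↑c * a := by rw [← this]; ring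
      rw [heq]; exact h2
  · rintro ⟨s, hs, hsx⟩
    refine ⟨⟨⟨s * x, hsx⟩, ⟨s, hs⟩⟩, ?_⟩
    simp only
    rw [← map_mul, mul_comm]

theorem principal_ideal_theorem [IsNoetherianRing R] [IsLocalRing R] {a : R}
    (hmin : IsLocalRing.maximalIdeal R ∈ (Ideal.span {a}).minimalPrimes)
    {q : Ideal R} (hq : q.IsPrime) (hlt : q < IsLocalRing.maximalIdeal R) :
    q ∈ minimalPrimes R := by
  set m := IsLocalRing.maximalIdeal R with hm
  have ha : a ∈ m := hmin.1.2 (Ideal.mem_span_singleton_self a)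
  -- the radical of (a) is m
  have hrad : (Ideal.span {a}).radical = m := by
    rw [Ideal.radical_eq_sInf]
    apply le_antisymm
    · exact sInf_le ⟨hmin.1.2, inferInstance⟩
    · refine le_sInf ?_
      rintro J ⟨hJle, hJp⟩
      exact hmin.2 ⟨hJp, hJle⟩ (IsLocalRing.le_maximalIdeal hJp.ne_top)
  obtain ⟨k, hk⟩ := Ideal.exists_radical_pow_le_of_fg (Ideal.span {a})
    (by rw [hrad]; exact IsNoetherian.noetherian m)
  rw [hrad] at hk
  have hanq : a ∉ q := by
    intro h
    have hle : Ideal.span {a} ≤ q := (Ideal.span_singleton_le_iff_mem _).mpr h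
    exact absurd (hmin.2 ⟨hq, hle⟩ hlt.le) (not_le_of_gt hlt)
  -- symbolic powers
  set L := Localization.AtPrime q with hL
  set φ := algebraMap R L with hφ
  set Q : ℕ → Ideal R := fun n => Ideal.comap φ (Ideal.map φ (q ^ n)) with hQ
  have hQanti : ∀ n, Q (n + 1) ≤ Q n := fun n =>
    Ideal.comap_mono (Ideal.map_mono (Ideal.pow_le_pow_right (Nat.le_succ n)))
  have hstab : ∃ N, Q N ⊔ Ideal.span {a} ≤ Q (N + 1) ⊔ Ideal.span {a} := by
    refine exists_antitone_pause (m := m) (k := k) _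
      (fun n => sup_le_sup_right (hQanti n) _) (fun n => le_trans hk le_sup_right)
  obtain ⟨N, hN⟩ := hstab
  have key : Q N ≤ Q (N + 1) ⊔ Ideal.span {a} • Q N := by
    intro x hx
    obtain ⟨y, hy, z, hz, hyz⟩ := Submodule.mem_sup.mp (hN (Submodule.mem_sup_left hx))
    obtain ⟨t, ht⟩ := Ideal.mem_span_singleton.mp hz
    have hxy : x - y ∈ Q N := Submodule.sub_mem _ hx (hQanti N hy)
    obtain ⟨s, hs, hsxy⟩ := mem_symbPow.mp hxy
    have hzt : z = a * t := ht
    have h1 : s * a * t ∈ q ^ N := by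
      have : x - y = z := by rw [← hyz]; ring
      have heq : s * a * t = s * (x - y) := by rw [this, hzt]; ring
      rw [heq]; exact hsxy
    have hsa : s * a ∉ q := fun hmem =>
      (hq.mem_or_mem hmem).elim hs hanq
    have htQ : t ∈ Q N := mem_symbPow.mpr ⟨s * a, hsa, h1⟩
    have : x = y + a * t := by rw [← hzt, hyz]
    rw [this]
    exact Submodule.add_mem _ (Submodule.mem_sup_left hy)
      (Submodule.mem_sup_right
        (by rw [← smul_eq_mul]
            exact Submodule.smul_mem_smul (Ideal.mem_span_singleton_self a) htQ))
  have hjac : Ideal.span {a} ≤ (⊥ : Ideal R).jacobson := by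
    rw [IsLocalRing.jacobson_eq_maximalIdeal ⊥ bot_ne_top]
    exact (Ideal.span_singleton_le_iff_mem _).mpr ha
  have hsmul : Ideal.span {a} • Q N ≤ Q (N + 1) :=
    Submodule.smul_le_of_le_smul_of_le_jacobson_bot (IsNoetherian.noetherian _) hjac key
  have hQeq : Q N = Q (N + 1) :=
    le_antisymm (key.trans (sup_le le_rfl hsmul)) (hQanti N)
  -- conclude (q L)^N = (q L)^(N+1), then Nakayama in L
  haveI : IsLocalRing L := Localization.AtPrime.isLocalRing q
  haveI : IsNoetherianRing L := IsLocalization.isNoetherianRing q.primeCompl L ‹_›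
  have hmapeq : Ideal.map φ q ^ N = Ideal.map φ q ^ (N + 1) := by
    have := congrArg (Ideal.map φ) hQeq
    rw [hQ] at this
    simp only [IsLocalization.map_comap q.primeCompl L] at this
    rw [Ideal.map_pow, Ideal.map_pow] at this
    exact (IsLocalization.map_comap q.primeCompl L _).symm.trans (this.trans (IsLocalization.map_comap q.primeCompl L _))
  have hmax : Ideal.map φ q = IsLocalRing.maximalIdeal L :=
    (congrArg (Ideal.map φ) (Localization.AtPrime.comap_maximalIdeal (I := q)).symm).trans
      (IsLocalization.map_comap q.primeCompl L _)
  have hbot : Ideal.map φ q ^ N = ⊥ := by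
    refine Submodule.eq_bot_of_le_smul_of_le_jacobson_bot (Ideal.map φ q) _
      (IsNoetherian.noetherian _) ?_ ?_
    · rw [smul_eq_mul, ← pow_succ']
      exact hmapeq.le
    · rw [IsLocalRing.jacobson_eq_maximalIdeal ⊥ bot_ne_top, hmax]
  -- q is a minimal prime
  refine ⟨⟨hq, bot_le⟩, ?_⟩
  rintro t ⟨htp, -⟩ hle
  intro x hx
  have h1 : φ x ^ N = 0 := by
    have : φ x ^ N ∈ Ideal.map φ q ^ N := Ideal.pow_mem_pow (Ideal.mem_map_of_mem φ hx) N
    rw [hbot] at this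
    simpa using this
  have h2 : φ (x ^ N) = 0 := by rw [map_pow, h1]
  obtain ⟨c, hc⟩ := (IsLocalization.map_eq_zero_iff q.primeCompl L _).mp h2
  have hcx : (↑c : R) * x ^ N ∈ t := by rw [hc]; exact t.zero_mem
  have hcnt : (↑c : R) ∉ t := fun h => c.2 (hle h)
  have hxN : x ^ N ∈ t := ((htp.mem_or_mem hcx).resolve_left hcnt)
  exact htp.mem_of_pow_mem _ hxN

end PIT

section KHT

lemma PrimeSpectrum.lt_iff' {R : Type*} [CommRing R] (x y : PrimeSpectrum R) :
    x < y ↔ x.asIdeal < y.asIdeal := by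
  rw [lt_iff_le_not_ge, lt_iff_le_not_ge, PrimeSpectrum.asIdeal_le_asIdeal,
    PrimeSpectrum.asIdeal_le_asIdeal]

universe u

theorem krull_height_le (r : ℕ) : ∀ (R : Type u) [CommRing R] [IsNoetherianRing R]
    (p : Ideal R) (hp : p.IsPrime) (s : Finset R), s.card ≤ r →
    p ∈ (Ideal.span (s : Set R)).minimalPrimes →
    Order.height (⟨p, hp⟩ : PrimeSpectrum R) ≤ (r : ℕ∞) := by
  induction r with
  | zero =>
    intro R _ _ p hp s hcard hmin
    have hs : s = ∅ := Finset.card_eq_zero.mp (Nat.le_zero.mp hcard)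
    subst hs
    rw [Finset.coe_empty, Ideal.span_empty] at hmin
    have : IsMin (⟨p, hp⟩ : PrimeSpectrum R) := by
      intro y hy
      have : p ≤ y.asIdeal := hmin.2 ⟨y.isPrime, bot_le⟩ ((PrimeSpectrum.asIdeal_le_asIdeal _ _).mpr hy)
      exact (PrimeSpectrum.asIdeal_le_asIdeal _ _).mp this
    rw [Order.height_eq_zero.mpr this]
    exact le_rfl
  | succ r IH =>
    intro R _ _ p hp s hcard hmin
    classical
    set L := Localization.AtPrime p with hLdef
    haveI : p.IsPrime := hp
    set φ := algebraMap R L with hφdef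
    haveI hLloc : IsLocalRing L := Localization.AtPrime.isLocalRing p
    haveI hLnoeth : IsNoetherianRing L := IsLocalization.isNoetherianRing p.primeCompl L ‹_›
    set m := IsLocalRing.maximalIdeal L with hmdef
    haveI hmprime : m.IsPrime := IsLocalRing.maximalIdeal.isMaximal L |>.isPrime
    have hcomapm : Ideal.comap φ m = p := Localization.AtPrime.comap_maximalIdeal
    -- Step 1: height transfer
    have step1 : Order.height (⟨p, hp⟩ : PrimeSpectrum R) ≤
        Order.height (⟨m, hmprime⟩ : PrimeSpectrum L) := by
      refine Order.height_le ?_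
      intro C hC
      have hle : ∀ i, (C i).asIdeal ≤ p := by
        intro i
        have : C i ≤ C.last := C.monotone (Fin.le_last i)
        rw [hC] at this
        exact (PrimeSpectrum.asIdeal_le_asIdeal _ _).mpr this
      have hdisj : ∀ i, Disjoint (p.primeCompl : Set R) ((C i).asIdeal : Set R) := by
        intro i
        rw [Set.disjoint_left]
        intro x hx hx2
        exact hx (hle i hx2)
      have hprime : ∀ i, (Ideal.map φ (C i).asIdeal).IsPrime := fun i =>
        IsLocalization.isPrime_of_isPrime_disjoint p.primeCompl L _ (C i).isPrime (hdisj i)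
      have hcm : ∀ i, Ideal.comap φ (Ideal.map φ (C i).asIdeal) = (C i).asIdeal := fun i =>
        IsLocalization.comap_map_of_isPrime_disjoint p.primeCompl L (C i).isPrime (hdisj i)
      let D : LTSeries (PrimeSpectrum L) :=
        { length := C.length
          toFun := fun i => ⟨Ideal.map φ (C i).asIdeal, hprime i⟩
          step := by
            intro i
            show (_ : PrimeSpectrum L) < _
            rw [PrimeSpectrum.lt_iff']
            have hlt : C i.castSucc < C i.succ := C.step i
            rw [PrimeSpectrum.lt_iff'] at hlt
            refine lt_of_le_of_ne (Ideal.map_mono hlt.le) ?_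
            intro heq
            have := congrArg (Ideal.comap φ) heq
            rw [hcm, hcm] at this
            exact hlt.ne this }
      have hDlast : D.last = ⟨m, hmprime⟩ := by
        have h1 : D.last = ⟨Ideal.map φ (C.last).asIdeal, _⟩ := rfl
        rw [h1]
        apply PrimeSpectrum.ext
        show Ideal.map φ (C.last).asIdeal = m
        rw [hC]
        show Ideal.map φ p = m
        exact (congrArg (Ideal.map φ) hcomapm.symm).trans (IsLocalization.map_comap p.primeCompl L _)
      calc (C.length : ℕ∞) = (D.length : ℕ∞) := rfl
      _ ≤ Order.height D.last := Order.length_le_height_last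
      _ = Order.height (⟨m, hmprime⟩ : PrimeSpectrum L) := by rw [hDlast]
    -- Step 2: m is minimal over the image ideal
    have hspan : Ideal.span ((s.image φ : Finset L) : Set L) = Ideal.map φ (Ideal.span s) := by
      rw [Finset.coe_image, Ideal.map_span]
    have hmin' : m ∈ (Ideal.span ((s.image φ : Finset L) : Set L)).minimalPrimes := by
      rw [hspan]
      constructor
      · refine ⟨hmprime, ?_⟩
        rw [Ideal.map_le_iff_le_comap, hcomapm]
        exact hmin.1.2
      · rintro T ⟨hT, hsT⟩ hTm
        haveI := hT
        have ht : (Ideal.comap φ T).IsPrime := hT.comap φ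
        have htp : Ideal.comap φ T ≤ p := le_trans (Ideal.comap_mono hTm) hcomapm.le
        have hst : Ideal.span (s : Set R) ≤ Ideal.comap φ T := Ideal.map_le_iff_le_comap.mp hsT
        have : p ≤ Ideal.comap φ T := hmin.2 ⟨ht, hst⟩ htp
        have heqc : Ideal.comap φ T = p := le_antisymm htp this
        have : T = m := by
          have h1 : Ideal.map φ (Ideal.comap φ T) = T := IsLocalization.map_comap p.primeCompl L T
          rw [heqc] at h1
          rw [← h1]
          exact (congrArg (Ideal.map φ) hcomapm.symm).trans (IsLocalization.map_comap p.primeCompl L _)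
        rw [this]
    -- Step 3: bound the height of m
    have step3 : Order.height (⟨m, hmprime⟩ : PrimeSpectrum L) ≤ ((r + 1 : ℕ) : ℕ∞) := by
      rw [Order.height_le_coe_iff]
      rintro ⟨Q, hQ⟩ hQlt
      rw [PrimeSpectrum.lt_iff'] at hQlt
      -- find a prime maximal among those strictly below m and above Q
      haveI : IsNoetherian L L := hLnoeth
      have hwf : WellFoundedGT (Submodule L L) := inferInstance
      obtain ⟨q'', ⟨hq''p, hQq'', hq''m⟩, hq''max⟩ :=
        hwf.wf.has_min {t : Ideal L | t.IsPrime ∧ Q ≤ t ∧ t < m} ⟨Q, hQ, le_rfl, hQlt⟩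
      have hq''max' : ∀ t : Ideal L, t.IsPrime → q'' ≤ t → t < m → t = q'' := by
        intro t htp hq''t htm
        rcases lt_or_eq_of_le hq''t with h | h
        · exact absurd h (hq''max t ⟨htp, hQq''.trans hq''t, htm⟩)
        · exact h.symm
      -- pick a generator not in q''
      have hbex : ∃ b ∈ s.image φ, b ∉ q'' := by
        by_contra hall
        push_neg at hall
        have : Ideal.span ((s.image φ : Finset L) : Set L) ≤ q'' := by
          rw [Ideal.span_le]; intro x hx; exact hall x (by exact_mod_cast hx)
        exact absurd (hmin'.2 ⟨hq''p, this⟩ hq''m.le) (not_le_of_gt hq''m)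
      obtain ⟨b, hbmem, hbq''⟩ := hbex
      have hbm : b ∈ m := hmin'.1.2 (Ideal.subset_span (by exact_mod_cast hbmem))
      -- m is minimal over q'' ⊔ (b)
      have hminJ : ∀ T : Ideal L, T.IsPrime → q'' ⊔ Ideal.span {b} ≤ T → T = m := by
        intro T hT hJT
        have hTm : T ≤ m := IsLocalRing.le_maximalIdeal hT.ne_top
        rcases lt_or_eq_of_le hTm with h | h
        · have : T = q'' := hq''max' T hT (le_trans le_sup_left hJT) h
          rw [this] at hJT
          exact absurd (hJT (le_sup_right (a := q'') (Ideal.mem_span_singleton_self b))) hbq''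
        · exact h
      -- every generator has a power in q'' ⊔ (b)
      have hradJ : ∀ bb ∈ s.image φ, ∃ n : ℕ, bb ^ n ∈ q'' ⊔ Ideal.span {b} := by
        intro bb hbb
        have : bb ∈ (q'' ⊔ Ideal.span {b} : Ideal L).radical := by
          rw [Ideal.radical_eq_sInf]
          refine Ideal.mem_sInf.mpr ?_
          rintro J ⟨hJle, hJp⟩
          have : J = m := hminJ J hJp hJle
          rw [this]
          exact hmin'.1.2 (Ideal.subset_span (by exact_mod_cast hbb))
        exact Ideal.mem_radical_iff.mp this
      -- choose decompositions
      have choice : ∀ bb : L, bb ∈ s.image φ → ∃ y, y ∈ q'' ∧ ∃ n : ℕ, ∃ c : L,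
          bb ^ n = y + b * c := by
        intro bb hbb
        obtain ⟨n, hn⟩ := hradJ bb hbb
        obtain ⟨y, hy, z, hz, hyz⟩ := Submodule.mem_sup.mp hn
        obtain ⟨c, hc⟩ := Ideal.mem_span_singleton.mp hz
        exact ⟨y, hy, n, c, by rw [← hyz, hc]⟩
      classical
      let g : L → L := fun bb => if h : bb ∈ s.image φ then Classical.choose (choice bb h) else 0
      have hg1 : ∀ bb (h : bb ∈ s.image φ), g bb ∈ q'' := by
        intro bb h
        simp only [g, dif_pos h]
        exact (Classical.choose_spec (choice bb h)).1
      have hg2 : ∀ bb (h : bb ∈ s.image φ), ∃ n : ℕ, ∃ c : L, bb ^ n = g bb + b * c := by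
        intro bb h
        simp only [g, dif_pos h]
        exact (Classical.choose_spec (choice bb h)).2
      set s' : Finset L := ((s.image φ).erase b).image g with hs'def
      set I' : Ideal L := Ideal.span (s' : Set L) with hI'def
      have hI'q'' : I' ≤ q'' := by
        rw [hI'def, Ideal.span_le]
        intro x hx
        rw [Finset.coe_image] at hx
        obtain ⟨bb, hbb, rfl⟩ := hx
        exact hg1 bb (Finset.mem_of_mem_erase (by exact_mod_cast hbb))
      have hcard' : s'.card ≤ r := by
        calc s'.card ≤ ((s.image φ).erase b).card := Finset.card_image_le
        _ = (s.image φ).card - 1 := Finset.card_erase_of_mem hbmem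
        _ ≤ s.card - 1 := Nat.sub_le_sub_right Finset.card_image_le 1
        _ ≤ (r + 1) - 1 := Nat.sub_le_sub_right hcard 1
        _ = r := rfl
      -- m is minimal over I' ⊔ (b)
      have hminI' : ∀ T : Ideal L, T.IsPrime → I' ⊔ Ideal.span {b} ≤ T → T = m := by
        intro T hT hJT
        have hTm : T ≤ m := IsLocalRing.le_maximalIdeal hT.ne_top
        have hsub : Ideal.span ((s.image φ : Finset L) : Set L) ≤ T := by
          rw [Ideal.span_le]
          intro bb hbb
          have hbb' : bb ∈ s.image φ := by exact_mod_cast hbb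
          by_cases hbbb : bb = b
          · subst hbbb
            exact hJT (le_sup_right (a := I') (Ideal.mem_span_singleton_self bb))
          · obtain ⟨n, c, hnc⟩ := hg2 bb hbb'
            have hgmem : g bb ∈ T := hJT (le_sup_left (b := Ideal.span {b})
              (Ideal.subset_span (by
                rw [Finset.coe_image]
                exact ⟨bb, by exact_mod_cast Finset.mem_erase.mpr ⟨hbbb, hbb'⟩, rfl⟩)))
            have hbmemT : b ∈ T := hJT (le_sup_right (a := I') (Ideal.mem_span_singleton_self b))
            have : bb ^ n ∈ T := by
              rw [hnc]
              exact Submodule.add_mem _ hgmem (Ideal.mul_mem_right c T hbmemT)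
            exact hT.mem_of_pow_mem _ this
        exact le_antisymm hTm (hmin'.2 ⟨hT, hsub⟩ hTm)
      -- pass to the quotient L ⧸ I' and apply the principal ideal theorem
      haveI : IsNoetherianRing (L ⧸ I') := inferInstance
      haveI hnt : Nontrivial (L ⧸ I') := Ideal.Quotient.nontrivial_iff.mpr
        (fun h => hq''p.ne_top (top_le_iff.mp (h ▸ hI'q'')))
      set π := Ideal.Quotient.mk I' with hπdef
      haveI : IsLocalRing (L ⧸ I') := IsLocalRing.of_surjective' π Ideal.Quotient.mk_surjective
      have hker : RingHom.ker π = I' := Ideal.mk_ker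
      set M' := IsLocalRing.maximalIdeal (L ⧸ I') with hM'def
      have hcomapM' : Ideal.comap π M' = m := by
        haveI : (Ideal.comap π M').IsMaximal :=
          Ideal.comap_isMaximal_of_surjective π Ideal.Quotient.mk_surjective
        exact IsLocalRing.eq_maximalIdeal this
      have hmapm : Ideal.map π m = M' := by
        rw [← hcomapM']
        exact Ideal.map_comap_of_surjective π Ideal.Quotient.mk_surjective M'
      have hminA : M' ∈ (Ideal.span {π b}).minimalPrimes := by
        constructor
        · refine ⟨(IsLocalRing.maximalIdeal.isMaximal _).isPrime, ?_⟩
          rw [Ideal.span_singleton_le_iff_mem]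
          have : b ∈ Ideal.comap π M' := hcomapM'.symm ▸ hbm
          exact this
        · rintro T' ⟨hT', hbT'⟩ hT'M'
          haveI := hT'
          have htp : (Ideal.comap π T').IsPrime := hT'.comap π
          have h1 : I' ⊔ Ideal.span {b} ≤ Ideal.comap π T' := by
            refine sup_le ?_ ?_
            · intro x hx
              have : π x = 0 := by rw [← hker] at hx; exact hx
              show π x ∈ T'
              rw [this]; exact T'.zero_mem
            · rw [Ideal.span_singleton_le_iff_mem]
              show π b ∈ T'
              exact hbT' (Ideal.mem_span_singleton_self _)
          have heq : Ideal.comap π T' = m := hminI' _ htp h1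
          have : T' = M' := by
            rw [← Ideal.map_comap_of_surjective π Ideal.Quotient.mk_surjective T', heq, hmapm]
          rw [this]
      have hq''ker : RingHom.ker π ≤ q'' := hker.le.trans hI'q''
      haveI hqbp : (Ideal.map π q'').IsPrime :=
        Ideal.map_isPrime_of_surjective (f := π) Ideal.Quotient.mk_surjective hq''ker
      have hcomapqb : Ideal.comap π (Ideal.map π q'') = q'' := by
        rw [Ideal.comap_map_of_surjective π Ideal.Quotient.mk_surjective, ← RingHom.ker_eq_comap_bot,
          hker]
        exact sup_eq_left.mpr hI'q''
      have hqblt : Ideal.map π q'' < M' := by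
        refine lt_of_le_of_ne ?_ ?_
        · rw [← hmapm]; exact Ideal.map_mono hq''m.le
        · intro heq
          have := congrArg (Ideal.comap π) heq
          rw [hcomapqb, hcomapM'] at this
          exact hq''m.ne this
      have hPIT := principal_ideal_theorem hminA hqbp hqblt
      -- pull back: q'' is minimal over I'
      have hq''min : q'' ∈ I'.minimalPrimes := by
        refine ⟨⟨hq''p, hI'q''⟩, ?_⟩
        rintro t ⟨htp, hI't⟩ htq''
        haveI := htp
        have hkert : RingHom.ker π ≤ t := hker.le.trans hI't
        have hmt : (Ideal.map π t).IsPrime :=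
          Ideal.map_isPrime_of_surjective (f := π) Ideal.Quotient.mk_surjective hkert
        have h2 : Ideal.map π q'' ≤ Ideal.map π t :=
          hPIT.2 ⟨hmt, bot_le⟩ ((Ideal.map_mono htq'' : Ideal.map π t ≤ Ideal.map π q''))
        have h3 : Ideal.comap π (Ideal.map π q'') ≤ Ideal.comap π (Ideal.map π t) :=
          Ideal.comap_mono h2
        rw [hcomapqb] at h3
        have h4 : Ideal.comap π (Ideal.map π t) = t := by
          rw [Ideal.comap_map_of_surjective π Ideal.Quotient.mk_surjective,
            ← RingHom.ker_eq_comap_bot, hker]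
          exact sup_eq_left.mpr hI't
        rw [h4] at h3
        exact h3
      -- apply the induction hypothesis in L
      have hIH := IH L q'' hq''p s' hcard' hq''min
      have hQle : (⟨Q, hQ⟩ : PrimeSpectrum L) ≤ ⟨q'', hq''p⟩ :=
        (PrimeSpectrum.asIdeal_le_asIdeal _ _).mp hQq''
      calc Order.height (⟨Q, hQ⟩ : PrimeSpectrum L) ≤ Order.height (⟨q'', hq''p⟩ : PrimeSpectrum L) :=
            Order.height_mono hQle
      _ ≤ (r : ℕ∞) := hIH
      _ < ((r + 1 : ℕ) : ℕ∞) := by exact_mod_cast Nat.lt_succ_self r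
    exact le_trans step1 (by exact_mod_cast step3)

end KHT

section ZD

theorem false_of_mem_minimalPrimes_nonZeroDivisor {A : Type*} [CommRing A]
    {q : Ideal A} (hq : q ∈ minimalPrimes A) {x : A} (hx : x ∈ q)
    (hnzd : x ∈ nonZeroDivisors A) : False := by
  haveI hqp : q.IsPrime := hq.1.1
  set L := Localization.AtPrime q with hLdef
  have hnil : ∃ n : ℕ, ∃ c, c ∉ q ∧ c * x ^ n = 0 := by
    have hxn : IsNilpotent (algebraMap A L x) := by
      rw [← mem_nilradical, nilradical_eq_sInf]
      refine Ideal.mem_sInf.mpr ?_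
      rintro T hT
      haveI : T.IsPrime := hT
      obtain ⟨hcom, hdisj⟩ :=
        (IsLocalization.isPrime_iff_isPrime_disjoint q.primeCompl L T).mp hT
      have hle : Ideal.comap (algebraMap A L) T ≤ q := by
        intro y hy
        by_contra hyq
        exact Set.disjoint_left.mp hdisj hyq hy
      have hge : q ≤ Ideal.comap (algebraMap A L) T := hq.2 ⟨hcom, bot_le⟩ hle
      exact hge hx
    obtain ⟨n, hn⟩ := hxn
    have h2 : algebraMap A L (x ^ n) = 0 := by rw [map_pow]; exact hn
    obtain ⟨c, hc⟩ := (IsLocalization.map_eq_zero_iff q.primeCompl L _).mp h2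
    exact ⟨n, c, c.2, hc⟩
  have kill : ∀ (n : ℕ) (c : A), c ∉ q → c * x ^ n = 0 → False := by
    intro n
    induction n with
    | zero =>
      intro c hc h0
      rw [pow_zero, mul_one] at h0
      exact hc (h0 ▸ q.zero_mem)
    | succ n ih =>
      intro c hc h0
      apply ih c hc
      apply hnzd.2
      rw [mul_assoc, ← pow_succ]
      exact h0
  obtain ⟨n, c, hc, h0⟩ := hnil
  exact kill n c hc h0

end ZD

section Polyomino

variable {K : Type*} [Field K] {P : Finset Cell}

lemma mem_vertexSet_of_mem {c : Cell} (hc : c ∈ P) {v : ℕ × ℕ}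
    (hv : v ∈ cellVertices c) : v ∈ vertexSet P := Finset.mem_biUnion.mpr ⟨c, hc, hv⟩

lemma corner_mem_vertexSet {i1 j1 i2 j2 : ℕ} (h : IsInnerInterval P i1 j1 i2 j2) {i j : ℕ}
    (h1 : i1 ≤ i) (h2 : i ≤ i2) (h3 : j1 ≤ j) (h4 : j ≤ j2) : (i, j) ∈ vertexSet P := by
  obtain ⟨hi, hj, hc⟩ := h
  set a := min i (i2 - 1) with ha
  set b := min j (j2 - 1) with hb
  have hcell : (a, b) ∈ P := hc a b (by omega) (by omega) (by omega) (by omega)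
  refine mem_vertexSet_of_mem hcell ?_
  simp only [cellVertices, Finset.mem_insert, Finset.mem_singleton, Prod.mk.injEq]
  omega

lemma cell_corner_mem₁ {c : Cell} (hc : c ∈ P) : ((c.1, c.2) : ℕ × ℕ) ∈ vertexSet P :=
  mem_vertexSet_of_mem hc (by simp [cellVertices])

lemma cell_corner_mem₂ {c : Cell} (hc : c ∈ P) : ((c.1 + 1, c.2 + 1) : ℕ × ℕ) ∈ vertexSet P :=
  mem_vertexSet_of_mem hc (by simp [cellVertices])

lemma cell_corner_mem₃ {c : Cell} (hc : c ∈ P) : ((c.1, c.2 + 1) : ℕ × ℕ) ∈ vertexSet P :=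
  mem_vertexSet_of_mem hc (by simp [cellVertices])

lemma cell_corner_mem₄ {c : Cell} (hc : c ∈ P) : ((c.1 + 1, c.2) : ℕ × ℕ) ∈ vertexSet P :=
  mem_vertexSet_of_mem hc (by simp [cellVertices])

lemma cellMinors_subset_innerMinors : cellMinors K P ⊆ innerMinors K P := by
  rintro f ⟨c, hc, ha, hb, hc', hd, rfl⟩
  refine ⟨c.1, c.2, c.1 + 1, c.2 + 1,
    ⟨Nat.lt_succ_self _, Nat.lt_succ_self _, ?_⟩, ha, hb, hc', hd, rfl⟩
  intro i j h1 h2 h3 h4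
  have hij : i = c.1 ∧ j = c.2 := by omega
  rw [hij.1, hij.2]
  exact hc

lemma innerMinors_subset_prime {q : Ideal (MvPolynomial {v : ℕ × ℕ // v ∈ vertexSet P} K)}
    (hq : q.IsPrime) (hcell : cellMinors K P ⊆ (q : Set (MvPolynomial _ K)))
    (hvar : ∀ v, X v ∉ q) : innerMinors K P ⊆ (q : Set (MvPolynomial _ K)) := by
  have main : ∀ d i1 j1 i2 j2, (i2 - i1) + (j2 - j1) ≤ d →
      IsInnerInterval P i1 j1 i2 j2 →
      ∀ (hva : (i1, j1) ∈ vertexSet P) (hvb : (i2, j2) ∈ vertexSet P)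
        (hvc : (i1, j2) ∈ vertexSet P) (hvd : (i2, j1) ∈ vertexSet P),
        (X ⟨(i1, j1), hva⟩ * X ⟨(i2, j2), hvb⟩ - X ⟨(i1, j2), hvc⟩ * X ⟨(i2, j1), hvd⟩ :
          MvPolynomial {v : ℕ × ℕ // v ∈ vertexSet P} K) ∈ q := by
    intro d
    induction d with
    | zero =>
      intro i1 j1 i2 j2 hsz hint
      exact absurd hsz (by obtain ⟨hi, hj, -⟩ := hint; omega)
    | succ d IH =>
      intro i1 j1 i2 j2 hsz hint hva hvb hvc hvd
      obtain ⟨hi, hj, hcells⟩ := hint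
      have hint' : IsInnerInterval P i1 j1 i2 j2 := ⟨hi, hj, hcells⟩
      by_cases hii : i1 + 1 < i2
      · set im := i1 + 1 with him
        have hint1 : IsInnerInterval P i1 j1 im j2 := ⟨Nat.lt_succ_self _, hj,
          fun i j a1 a2 a3 a4 => hcells i j a1 (by omega) a3 a4⟩
        have hint2 : IsInnerInterval P im j1 i2 j2 := ⟨by omega, hj,
          fun i j a1 a2 a3 a4 => hcells i j (by omega) a2 a3 a4⟩
        have hm1 : ((im, j1) : ℕ × ℕ) ∈ vertexSet P :=
          corner_mem_vertexSet hint' (by omega) (by omega) le_rfl hj.le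
        have hm2 : ((im, j2) : ℕ × ℕ) ∈ vertexSet P :=
          corner_mem_vertexSet hint' (by omega) (by omega) hj.le le_rfl
        have G := IH im j1 i2 j2 (by omega) hint2 hm1 hvb hm2 hvd
        have H := IH i1 j1 im j2 (by omega) hint1 hva hm2 hvc hm1
        have idt : (X ⟨(im, j1), hm1⟩ : MvPolynomial {v : ℕ × ℕ // v ∈ vertexSet P} K) *
            (X ⟨(i1, j1), hva⟩ * X ⟨(i2, j2), hvb⟩ - X ⟨(i1, j2), hvc⟩ * X ⟨(i2, j1), hvd⟩) =
            X ⟨(i1, j1), hva⟩ *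
              (X ⟨(im, j1), hm1⟩ * X ⟨(i2, j2), hvb⟩ - X ⟨(im, j2), hm2⟩ * X ⟨(i2, j1), hvd⟩)
            + X ⟨(i2, j1), hvd⟩ *
              (X ⟨(i1, j1), hva⟩ * X ⟨(im, j2), hm2⟩ - X ⟨(i1, j2), hvc⟩ * X ⟨(im, j1), hm1⟩) := by
          ring
        have hmul : (X ⟨(im, j1), hm1⟩ : MvPolynomial {v : ℕ × ℕ // v ∈ vertexSet P} K) *
            (X ⟨(i1, j1), hva⟩ * X ⟨(i2, j2), hvb⟩ - X ⟨(i1, j2), hvc⟩ * X ⟨(i2, j1), hvd⟩) ∈ q := by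
          rw [idt]
          exact Submodule.add_mem _ (Ideal.mul_mem_left _ _ G) (Ideal.mul_mem_left _ _ H)
        exact (hq.mem_or_mem hmul).resolve_left (hvar _)
      · by_cases hjj : j1 + 1 < j2
        · set jm := j1 + 1 with hjm
          have hint1 : IsInnerInterval P i1 j1 i2 jm := ⟨hi, Nat.lt_succ_self _,
            fun i j a1 a2 a3 a4 => hcells i j a1 a2 a3 (by omega)⟩
          have hint2 : IsInnerInterval P i1 jm i2 j2 := ⟨hi, by omega,
            fun i j a1 a2 a3 a4 => hcells i j a1 a2 (by omega) a4⟩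
          have hm1 : ((i1, jm) : ℕ × ℕ) ∈ vertexSet P :=
            corner_mem_vertexSet hint' le_rfl hi.le (by omega) (by omega)
          have hm2 : ((i2, jm) : ℕ × ℕ) ∈ vertexSet P :=
            corner_mem_vertexSet hint' hi.le le_rfl (by omega) (by omega)
          have G := IH i1 jm i2 j2 (by omega) hint2 hm1 hvb hvc hm2
          have H := IH i1 j1 i2 jm (by omega) hint1 hva hm2 hm1 hvd
          have idt : (X ⟨(i1, jm), hm1⟩ : MvPolynomial {v : ℕ × ℕ // v ∈ vertexSet P} K) *
              (X ⟨(i1, j1), hva⟩ * X ⟨(i2, j2), hvb⟩ - X ⟨(i1, j2), hvc⟩ * X ⟨(i2, j1), hvd⟩) =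
              X ⟨(i1, j1), hva⟩ *
                (X ⟨(i1, jm), hm1⟩ * X ⟨(i2, j2), hvb⟩ - X ⟨(i1, j2), hvc⟩ * X ⟨(i2, jm), hm2⟩)
              + X ⟨(i1, j2), hvc⟩ *
                (X ⟨(i1, j1), hva⟩ * X ⟨(i2, jm), hm2⟩ - X ⟨(i1, jm), hm1⟩ * X ⟨(i2, j1), hvd⟩) := by
            ring
          have hmul : (X ⟨(i1, jm), hm1⟩ : MvPolynomial {v : ℕ × ℕ // v ∈ vertexSet P} K) *
              (X ⟨(i1, j1), hva⟩ * X ⟨(i2, j2), hvb⟩ - X ⟨(i1, j2), hvc⟩ * X ⟨(i2, j1), hvd⟩) ∈ q := by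
            rw [idt]
            exact Submodule.add_mem _ (Ideal.mul_mem_left _ _ G) (Ideal.mul_mem_left _ _ H)
          exact (hq.mem_or_mem hmul).resolve_left (hvar _)
        · have h1 : i2 = i1 + 1 := by omega
          have h2 : j2 = j1 + 1 := by omega
          subst h1
          subst h2
          apply hcell
          exact ⟨(i1, j1), hcells i1 j1 le_rfl (by omega) le_rfl (by omega),
            hva, hvb, hvc, hvd, rfl⟩
  rintro f ⟨i1, j1, i2, j2, hint, ha, hb, hc, hd, rfl⟩
  exact main ((i2 - i1) + (j2 - j1)) i1 j1 i2 j2 le_rfl hint ha hb hc hd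

noncomputable def cellMinorOf (K : Type*) [Field K] (P : Finset Cell) (c : {x // x ∈ P}) :
    MvPolynomial {v : ℕ × ℕ // v ∈ vertexSet P} K :=
  X ⟨(c.1.1, c.1.2), cell_corner_mem₁ c.2⟩ * X ⟨(c.1.1 + 1, c.1.2 + 1), cell_corner_mem₂ c.2⟩ -
  X ⟨(c.1.1, c.1.2 + 1), cell_corner_mem₃ c.2⟩ * X ⟨(c.1.1 + 1, c.1.2), cell_corner_mem₄ c.2⟩

end Polyomino

/-- If every variable `x_v` is a non-zerodivisor modulo the polyomino ideal `I_P`,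
then `height I_P ≤ |P|`. -/
theorem stmt_9 {K : Type*} [Field K] (P : Finset Cell) (hP : IsPolyomino P)
    (hnzd : ∀ v : {v : ℕ × ℕ // v ∈ vertexSet P},
      Ideal.Quotient.mk (Ideal.span (innerMinors K P)) (X v) ∈
        nonZeroDivisors (MvPolynomial {v : ℕ × ℕ // v ∈ vertexSet P} K ⧸
          Ideal.span (innerMinors K P))) :
    idealHeight (Ideal.span (innerMinors K P)) ≤ P.card := by
  classical
  set S' := MvPolynomial {v : ℕ × ℕ // v ∈ vertexSet P} K with hS'
  set I : Ideal S' := Ideal.span (innerMinors K P) with hIdef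
  haveI : IsNoetherianRing S' := MvPolynomial.isNoetherianRing
  have hIne : I ≠ ⊤ := by
    intro htop
    have h1 : (1 : S') ∈ I := htop ▸ Submodule.mem_top
    have hle : I ≤ RingHom.ker (constantCoeff : S' →+* K) := by
      rw [hIdef, Ideal.span_le]
      rintro f ⟨i1, j1, i2, j2, -, ha, hb, hc, hd, rfl⟩
      rw [SetLike.mem_coe, RingHom.mem_ker, map_sub, map_mul, map_mul]
      rw [show (constantCoeff (X ⟨(i1, j1), ha⟩ : S') : K) = 0 from constantCoeff_X K _,
        show (constantCoeff (X ⟨(i1, j2), hc⟩ : S') : K) = 0 from constantCoeff_X K _]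
      ring
    have h2 := hle h1
    rw [RingHom.mem_ker, map_one] at h2
    exact one_ne_zero h2
  obtain ⟨M, hM, hIM⟩ := Ideal.exists_le_maximal I hIne
  haveI := hM.isPrime
  obtain ⟨p, hpmem, hpM⟩ := Ideal.exists_minimalPrimes_le hIM
  have hpprime : p.IsPrime := hpmem.1.1
  have hIp : I ≤ p := hpmem.1.2
  have hker : RingHom.ker (Ideal.Quotient.mk I) = I := Ideal.mk_ker
  have hkerp : RingHom.ker (Ideal.Quotient.mk I) ≤ p := hker.le.trans hIp
  have hvar : ∀ v, X v ∉ p := by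
    intro v hv
    have hprime : (Ideal.map (Ideal.Quotient.mk I) p).IsPrime := by
      haveI := hpprime
      exact Ideal.map_isPrime_of_surjective (f := Ideal.Quotient.mk I)
        Ideal.Quotient.mk_surjective hkerp
    have hmapmin : Ideal.map (Ideal.Quotient.mk I) p ∈ minimalPrimes (S' ⧸ I) := by
      refine ⟨⟨hprime, bot_le⟩, ?_⟩
      rintro T ⟨hT, -⟩ hTle
      haveI := hT
      have hcomapT : (Ideal.comap (Ideal.Quotient.mk I) T).IsPrime :=
        hT.comap (Ideal.Quotient.mk I)
      have hcmp : Ideal.comap (Ideal.Quotient.mk I) (Ideal.map (Ideal.Quotient.mk I) p) = p := by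
        rw [Ideal.comap_map_of_surjective _ Ideal.Quotient.mk_surjective,
          ← RingHom.ker_eq_comap_bot, hker]
        exact sup_eq_left.mpr hIp
      have h1 : Ideal.comap (Ideal.Quotient.mk I) T ≤ p := by
        rw [← hcmp]
        exact Ideal.comap_mono hTle
      have h2 : I ≤ Ideal.comap (Ideal.Quotient.mk I) T := by
        intro x hx
        show Ideal.Quotient.mk I x ∈ T
        have : Ideal.Quotient.mk I x = 0 := by
          rw [← RingHom.mem_ker, hker]; exact hx
        rw [this]
        exact T.zero_mem
      have h3 : p ≤ Ideal.comap (Ideal.Quotient.mk I) T := hpmem.2 ⟨hcomapT, h2⟩ h1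
      exact Ideal.map_le_iff_le_comap.mpr h3
    exact false_of_mem_minimalPrimes_nonZeroDivisor hmapmin
      (Ideal.mem_map_of_mem _ hv) (hnzd v)
  have hpJ : p ∈ (Ideal.span (cellMinors K P)).minimalPrimes := by
    refine ⟨⟨hpprime, le_trans (Ideal.span_mono cellMinors_subset_innerMinors) hIp⟩, ?_⟩
    rintro t ⟨htp, hct⟩ htle
    have hvar' : ∀ v, X v ∉ t := fun v hv => hvar v (htle hv)
    have hcellsub : cellMinors K P ⊆ (t : Set S') :=
      le_trans (Ideal.subset_span (α := S')) hct
    have hinner := innerMinors_subset_prime htp hcellsub hvar'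
    have hIt : I ≤ t := by rw [hIdef, Ideal.span_le]; exact hinner
    exact hpmem.2 ⟨htp, hIt⟩ htle
  set F : Finset S' := P.attach.image (cellMinorOf K P) with hFdef
  have hFset : (F : Set S') = cellMinors K P := by
    ext f
    rw [hFdef]
    simp only [Finset.coe_image, Set.mem_image, Finset.mem_coe, Finset.mem_attach, true_and]
    constructor
    · rintro ⟨c, -, rfl⟩
      exact ⟨c.1, c.2, cell_corner_mem₁ c.2, cell_corner_mem₂ c.2, cell_corner_mem₃ c.2,
        cell_corner_mem₄ c.2, rfl⟩
    · rintro ⟨c, hc, ha, hb, hc', hd, rfl⟩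
      exact ⟨⟨c, hc⟩, rfl⟩
  have hFcard : F.card ≤ P.card := by
    rw [hFdef]
    exact le_trans Finset.card_image_le (le_of_eq (Finset.card_attach))
  have hkht := krull_height_le P.card S' p hpprime F hFcard
    (by rw [hFset]; exact hpJ)
  refine le_trans ?_ hkht
  have : idealHeight I = ⨅ (pp : PrimeSpectrum S') (_ : I ≤ pp.asIdeal), Order.height pp := rfl
  rw [hIdef] at this ⊢
  rw [this]
  exact iInf₂_le (⟨p, hpprime⟩ : PrimeSpectrum S') hIp
end

section
/- Let P be a finite poset with d ≥ 2 elements and L = J(P) a simple distributive lattice (ρ_L(i) ≥ 2 for 1 ≤ i ≤ d−1). Suppose there exists 1 ≤ i0 ≤ d−1 with ρ_L(i0) ≥ 4 and ρ_L(i) = 2 for all other 1 ≤ i ≤ d−1, i ≠ i0. If P contains a subposet isomorphic to the disjoint union of two 3-element chains a1 < a2 < a3 and a4 < a5 < a6, then ρ_L(i0 − 1) ≥ 3 or ρ_L(i0 + 1) ≥ 3, yielding a contradiction; hence no such L exists containing such a subposet. -/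
/-- The distributive lattice of order ideals (down-sets) of a finite poset `P`,
ordered by inclusion. -/
abbrev OrderIdeals (P : Type*) [PartialOrder P] := {S : Finset P // IsLowerSet (S : Set P)}

/-- `ρ_L(i)`: the number of elements of `L = J(P)` of rank `i`, the rank of an
order ideal being its cardinality. -/
noncomputable def rho (P : Type*) [PartialOrder P] [Fintype P] [DecidableEq P] (i : ℕ) : ℕ :=
  Nat.card {I : OrderIdeals P // I.1.card = i}

section Helpers

variable {P : Type*} [PartialOrder P] [Fintype P] [DecidableEq P]

lemma three_le_nat_card {α : Type*} [Finite α] {x y z : α}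
    (hxy : x ≠ y) (hxz : x ≠ z) (hyz : y ≠ z) : 3 ≤ Nat.card α := by
  have hinj : Function.Injective ![x, y, z] := by
    intro i j hij
    fin_cases i <;> fin_cases j <;> simp_all
  simpa using Nat.card_le_card_of_injective _ hinj

lemma rho_ge_three {i : ℕ} {I J K : Finset P}
    (hI : IsLowerSet (I : Set P)) (hJ : IsLowerSet (J : Set P)) (hK : IsLowerSet (K : Set P))
    (hIc : I.card = i) (hJc : J.card = i) (hKc : K.card = i)
    (hIJ : I ≠ J) (hIK : I ≠ K) (hJK : J ≠ K) : 3 ≤ rho P i := by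
  unfold rho
  exact three_le_nat_card
    (x := ⟨⟨I, hI⟩, hIc⟩) (y := ⟨⟨J, hJ⟩, hJc⟩) (z := ⟨⟨K, hK⟩, hKc⟩)
    (fun h => hIJ (congrArg (fun t => t.1.1) h))
    (fun h => hIK (congrArg (fun t => t.1.1) h))
    (fun h => hJK (congrArg (fun t => t.1.1) h))

lemma uniq2 {i : ℕ} (hrho : rho P i = 2) {I J K : Finset P}
    (hI : IsLowerSet (I : Set P)) (hJ : IsLowerSet (J : Set P)) (hK : IsLowerSet (K : Set P))
    (hIc : I.card = i) (hJc : J.card = i) (hKc : K.card = i) :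
    I = J ∨ I = K ∨ J = K := by
  by_contra h
  push_neg at h
  have := rho_ge_three hI hJ hK hIc hJc hKc h.1 h.2.1 h.2.2
  omega

/-- Interpolation: between nested ideals there is an ideal of any intermediate size. -/
lemma interp : ∀ (Y X : Finset P), IsLowerSet (X : Set P) → IsLowerSet (Y : Set P) → X ⊆ Y →
    ∀ j, X.card ≤ j → j ≤ Y.card →
    ∃ Z : Finset P, IsLowerSet (Z : Set P) ∧ X ⊆ Z ∧ Z ⊆ Y ∧ Z.card = j := by
  intro Y
  induction Y using Finset.strongInduction with
  | _ Y ih =>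
    intro X hX hY hXY j hj1 hj2
    rcases eq_or_lt_of_le hj2 with h | h
    · exact ⟨Y, hY, hXY, subset_rfl, h.symm⟩
    · have hne : (Y \ X).Nonempty := by
        rw [Finset.sdiff_nonempty]
        intro hYX
        have := Finset.card_le_card hYX
        omega
      obtain ⟨m, hm, hmax'⟩ := Finset.exists_maximal hne
      have hmax : ∀ x ∈ Y \ X, ¬ m < x := fun x hx hlt => hlt.not_ge (hmax' hx hlt.le)
      rw [Finset.mem_sdiff] at hm
      have hYm : IsLowerSet ((Y.erase m : Finset P) : Set P) := by
        intro a b hba ha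
        simp only [Finset.coe_erase, Set.mem_diff, Finset.mem_coe, Set.mem_singleton_iff] at ha ⊢
        refine ⟨hY hba ha.1, ?_⟩
        rintro rfl
        have hlt : b < a := lt_of_le_of_ne hba (by rintro rfl; exact ha.2 rfl)
        by_cases haX : a ∈ X
        · exact hm.2 (hX hba haX)
        · exact hmax a (Finset.mem_sdiff.mpr ⟨ha.1, haX⟩) hlt
      have hXe : X ⊆ Y.erase m := fun x hx =>
        Finset.mem_erase.mpr ⟨by rintro rfl; exact hm.2 hx, hXY hx⟩
      have hcard : (Y.erase m).card = Y.card - 1 := Finset.card_erase_of_mem hm.1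
      obtain ⟨Z, h1, h2, h3, h4⟩ := ih (Y.erase m) (Finset.erase_ssubset hm.1) X hX hYm hXe j hj1 (by omega)
      exact ⟨Z, h1, h2, fun x hx => Finset.mem_of_mem_erase (h3 hx), h4⟩

lemma interp_up (X : Finset P) (hX : IsLowerSet (X : Set P)) (j : ℕ)
    (hj1 : X.card ≤ j) (hj2 : j ≤ Fintype.card P) :
    ∃ Z : Finset P, IsLowerSet (Z : Set P) ∧ X ⊆ Z ∧ Z.card = j := by
  obtain ⟨Z, h1, h2, _, h4⟩ := interp Finset.univ X hX (by simp [isLowerSet_univ])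
    (Finset.subset_univ X) j hj1 (by simpa using hj2)
  exact ⟨Z, h1, h2, h4⟩

lemma interp_down (Y : Finset P) (hY : IsLowerSet (Y : Set P)) (j : ℕ) (hj : j ≤ Y.card) :
    ∃ Z : Finset P, IsLowerSet (Z : Set P) ∧ Z ⊆ Y ∧ Z.card = j := by
  obtain ⟨Z, h1, _, h3, h4⟩ := interp Y ∅ (by simp only [Finset.coe_empty]; exact isLowerSet_empty) hY (Finset.empty_subset Y) j (by simp) hj
  exact ⟨Z, h1, h3, h4⟩

end Helpers

section M
set_option linter.unusedSectionVars false
variable {P : Type*} [PartialOrder P] [Fintype P] [DecidableEq P]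

lemma inter_card_lt {Y N : Finset P} (hne : Y ≠ N) (hc : Y.card = N.card) :
    (Y ∩ N).card < Y.card := by
  rcases lt_or_eq_of_le (Finset.card_le_card (Finset.inter_subset_left : Y ∩ N ⊆ Y)) with h | h
  · exact h
  · exfalso
    have h3 : Y ∩ N = Y := Finset.eq_of_subset_of_card_le Finset.inter_subset_left (le_of_eq h.symm)
    have h4 : Y ⊆ N := by rw [← h3]; exact Finset.inter_subset_right
    exact hne (Finset.eq_of_subset_of_card_le h4 (le_of_eq hc.symm))

lemma lemmaM_sorted (i0 : ℕ)
    (h2 : ∀ i, 1 ≤ i → i ≤ Fintype.card P - 1 → i ≠ i0 → rho P i = 2)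
    (X Y Z : Finset P)
    (hX : IsLowerSet (X : Set P)) (hY : IsLowerSet (Y : Set P)) (hZ : IsLowerSet (Z : Set P))
    (hXY : ¬ X ⊆ Y) (hYX : ¬ Y ⊆ X) (hXZ : ¬ X ⊆ Z) (hZX : ¬ Z ⊆ X)
    (hYZ : ¬ Y ⊆ Z) (hZY : ¬ Z ⊆ Y)
    (huv : X.card ≤ Y.card) (hvw : Y.card ≤ Z.card) :
    (X.card = i0 ∧ Y.card = i0) ∨ (X.card = i0 ∧ Z.card = i0) ∨ (Y.card = i0 ∧ Z.card = i0) := by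
  have hXd : X.card ≤ Fintype.card P := Finset.card_le_univ X
  have hYd : Y.card ≤ Fintype.card P := Finset.card_le_univ Y
  have hZd : Z.card ≤ Fintype.card P := Finset.card_le_univ Z
  have hu1 : 1 ≤ X.card := by
    rcases Nat.eq_zero_or_pos X.card with h | h
    · exact absurd ((Finset.card_eq_zero.mp h) ▸ Finset.empty_subset Y) hXY
    · exact h
  have hwlt : Z.card < Fintype.card P := by
    rcases lt_or_eq_of_le hZd with h | h
    · exact h
    · exact absurd ((Finset.eq_univ_of_card Z h) ▸ Finset.subset_univ Y) hYZ
  rcases eq_or_lt_of_le huv with huv' | huv' <;> rcases eq_or_lt_of_le hvw with hvw' | hvw'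
  · -- u = v = w
    by_cases hvi : Y.card = i0
    · exact Or.inl ⟨huv' ▸ hvi, hvi⟩
    · exfalso
      rcases uniq2 (h2 Y.card (by omega) (by omega) hvi) hX hY hZ huv' rfl hvw'.symm with h | h | h
      · exact hXY (h ▸ subset_rfl)
      · exact hXZ (h ▸ subset_rfl)
      · exact hYZ (h ▸ subset_rfl)
  · -- u = v < w
    by_cases hui : X.card = i0
    · exact Or.inl ⟨hui, huv' ▸ hui⟩
    · exfalso
      obtain ⟨T, hT, hTZ, hTcard⟩ := interp_down Z hZ X.card (by omega)
      rcases uniq2 (h2 X.card hu1 (by omega) hui) hX hY hT rfl huv'.symm hTcard with h | h | h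
      · exact hXY (h ▸ subset_rfl)
      · exact hXZ (h ▸ hTZ)
      · exact hYZ (h ▸ hTZ)
  · -- u < v = w
    by_cases hvi : Y.card = i0
    · exact Or.inr (Or.inr ⟨hvi, hvw' ▸ hvi⟩)
    · exfalso
      obtain ⟨S, hS, hXS, hScard⟩ := interp_up X hX Y.card (le_of_lt huv') hYd
      rcases uniq2 (h2 Y.card (by omega) (by omega) hvi) hS hY hZ hScard rfl hvw'.symm with h | h | h
      · exact hXY (h ▸ hXS)
      · exact hXZ (h ▸ hXS)
      · exact hYZ (h ▸ subset_rfl)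
  · -- u < v < w
    exfalso
    by_cases hvi : Y.card = i0
    · -- the hard case
      obtain ⟨p, hpv⟩ : ∃ p, Y.card = p + 1 := ⟨Y.card - 1, by omega⟩
      -- (a)
      obtain ⟨C, hC, hXC, hCcard⟩ := interp_up X hX p (by omega) (by omega)
      -- (b)
      obtain ⟨D, hD, hDY, hDcard⟩ := interp_down Y hY p (by omega)
      -- (c)
      obtain ⟨D', hD', hD'Z, hD'card⟩ := interp_down Z hZ p (by omega)
      have hCD : C ≠ D := by intro h; exact hXY ((h ▸ hXC).trans hDY)
      have hCD' : C ≠ D' := by intro h; exact hXZ ((h ▸ hXC).trans hD'Z)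
      have hDD' : D = D' := by
        rcases uniq2 (h2 p (by omega) (by omega) (by omega)) hC hD hD' hCcard hDcard hD'card
          with h | h | h
        · exact absurd h hCD
        · exact absurd h hCD'
        · exact h
      have hDZ : D ⊆ Z := hDD' ▸ hD'Z
      -- (d)
      obtain ⟨A, hA, hYA, hAcard⟩ := interp_up Y hY (Y.card + 1) (by omega) (by omega)
      -- (e)
      obtain ⟨B, hB, hBZ, hBcard⟩ := interp_down Z hZ (Y.card + 1) (by omega)
      have hAB : A ≠ B := by intro h; exact hYZ ((h ▸ hYA).trans hBZ)
      -- (f)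
      obtain ⟨A', hA', hXA', hA'card⟩ := interp_up X hX (Y.card + 1) (by omega) (by omega)
      have hA'B : A' ≠ B := by intro h; exact hXZ ((h ▸ hXA').trans hBZ)
      have hAA' : A = A' := by
        rcases uniq2 (h2 (Y.card + 1) (by omega) (by omega) (by omega)) hA hB hA'
          hAcard hBcard hA'card with h | h | h
        · exact absurd h hAB
        · exact h
        · exact absurd h.symm hA'B
      have hXA : X ⊆ A := hAA' ▸ hXA'
      -- (g)
      obtain ⟨N, hN, hXN, hNA, hNcard⟩ := interp A X hX hA hXA Y.card (le_of_lt huv') (by omega)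
      have hNY : N ≠ Y := by intro h; exact hXY (h ▸ hXN)
      -- (h)
      have hsumN := Finset.card_union_add_card_inter Y N
      have hinterN : (Y ∩ N).card < Y.card := inter_card_lt (fun h => hNY h.symm) (by omega)
      have hYNA : Y ∪ N ⊆ A := Finset.union_subset hYA hNA
      have hYNle : (Y ∪ N).card ≤ Y.card + 1 := hAcard ▸ Finset.card_le_card hYNA
      have hUcard : (Y ∪ N).card = Y.card + 1 := by omega
      have hIcard : (Y ∩ N).card = p := by omega
      have hYUNA : Y ∪ N = A := Finset.eq_of_subset_of_card_le hYNA (by omega)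
      have hKlower : IsLowerSet ((Y ∩ N : Finset P) : Set P) := by
        rw [Finset.coe_inter]; exact hY.inter hN
      have hKC : Y ∩ N ≠ C := by
        intro h
        exact hXY ((h.symm ▸ hXC : X ⊆ Y ∩ N).trans Finset.inter_subset_left)
      have hKD : Y ∩ N = D := by
        rcases uniq2 (h2 p (by omega) (by omega) (by omega)) hC hKlower hD hCcard hIcard hDcard
          with h | h | h
        · exact absurd h.symm hKC
        · exact absurd h hCD
        · exact h
      -- (i)
      obtain ⟨M, hM, hDM, hMZ, hMcard⟩ := interp Z D hD hZ hDZ Y.card (by omega) (by omega)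
      have hMY : M ≠ Y := by intro h; exact hYZ (h ▸ hMZ)
      have hMN : M ≠ N := by intro h; exact hXZ ((h.symm ▸ hXN : X ⊆ M).trans hMZ)
      -- (j)
      have hinterM : (Y ∩ M).card < Y.card := inter_card_lt (fun h => hMY h.symm) (by omega)
      have hYM_inter : Y ∩ M = D := by
        have hsub : D ⊆ Y ∩ M := Finset.subset_inter hDY hDM
        exact (Finset.eq_of_subset_of_card_le hsub (by omega)).symm
      have hsumM := Finset.card_union_add_card_inter Y M
      have hYMcard : (Y ∪ M).card = Y.card + 1 := by
        have : (Y ∩ M).card = p := by rw [hYM_inter]; exact hDcard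
        omega
      have hYMlower : IsLowerSet ((Y ∪ M : Finset P) : Set P) := by
        rw [Finset.coe_union]; exact hY.union hM
      have hBYM : B ≠ Y ∪ M := by
        intro h
        exact hYZ ((Finset.subset_union_left : Y ⊆ Y ∪ M).trans
          (h ▸ hBZ : Y ∪ M ⊆ Z))
      have hAYM : A = Y ∪ M := by
        rcases uniq2 (h2 (Y.card + 1) (by omega) (by omega) (by omega)) hA hB hYMlower
          hAcard hBcard hYMcard with h | h | h
        · exact absurd h hAB
        · exact h
        · exact absurd h hBYM
      -- (k)
      have h1 : N \ Y = A \ Y := by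
        rw [← hYUNA, Finset.union_sdiff_left]
      have h2' : M \ Y = A \ Y := by
        rw [hAYM, Finset.union_sdiff_left]
      have hfin : N \ Y ∪ N ∩ Y = M \ Y ∪ M ∩ Y := by
        rw [h1, h2', Finset.inter_comm N Y, Finset.inter_comm M Y, hKD, hYM_inter]
      rw [Finset.sdiff_union_inter, Finset.sdiff_union_inter] at hfin
      exact hMN hfin.symm
    · -- v ≠ i0 : impossible directly
      obtain ⟨S, hS, hXS, hScard⟩ := interp_up X hX Y.card (le_of_lt huv') hYd
      obtain ⟨T, hT, hTZ, hTcard⟩ := interp_down Z hZ Y.card (by omega)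
      rcases uniq2 (h2 Y.card (by omega) (by omega) hvi) hS hT hY hScard hTcard rfl
        with h | h | h
      · exact hXZ ((h ▸ hXS).trans hTZ)
      · exact hXY (h ▸ hXS)
      · exact hYZ (h ▸ hTZ)

end M

section M2
set_option linter.unusedSectionVars false
variable {P : Type*} [PartialOrder P] [Fintype P] [DecidableEq P]

lemma lemmaM (i0 : ℕ)
    (h2 : ∀ i, 1 ≤ i → i ≤ Fintype.card P - 1 → i ≠ i0 → rho P i = 2)
    (X Y Z : Finset P)
    (hX : IsLowerSet (X : Set P)) (hY : IsLowerSet (Y : Set P)) (hZ : IsLowerSet (Z : Set P))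
    (hXY : ¬ X ⊆ Y) (hYX : ¬ Y ⊆ X) (hXZ : ¬ X ⊆ Z) (hZX : ¬ Z ⊆ X)
    (hYZ : ¬ Y ⊆ Z) (hZY : ¬ Z ⊆ Y) :
    (X.card = i0 ∧ Y.card = i0) ∨ (X.card = i0 ∧ Z.card = i0) ∨ (Y.card = i0 ∧ Z.card = i0) := by
  rcases le_total X.card Y.card with h1 | h1 <;> rcases le_total Y.card Z.card with hb | hb <;>
    rcases le_total X.card Z.card with h3 | h3
  · have := lemmaM_sorted i0 h2 X Y Z hX hY hZ hXY hYX hXZ hZX hYZ hZY h1 hb; tauto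
  · have := lemmaM_sorted i0 h2 X Y Z hX hY hZ hXY hYX hXZ hZX hYZ hZY h1 hb; tauto
  · have := lemmaM_sorted i0 h2 X Z Y hX hZ hY hXZ hZX hXY hYX hZY hYZ h3 hb; tauto
  · have := lemmaM_sorted i0 h2 Z X Y hZ hX hY hZX hXZ hZY hYZ hXY hYX h3 h1; tauto
  · have := lemmaM_sorted i0 h2 Y X Z hY hX hZ hYX hXY hYZ hZY hXZ hZX h1 h3; tauto
  · have := lemmaM_sorted i0 h2 Y Z X hY hZ hX hYZ hZY hYX hXY hZX hXZ hb h3; tauto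
  · have := lemmaM_sorted i0 h2 X Y Z hX hY hZ hXY hYX hXZ hZX hYZ hZY (by omega) (by omega); tauto
  · have := lemmaM_sorted i0 h2 Z Y X hZ hY hX hZY hYZ hZX hXZ hYX hXY hb h1; tauto

end M2

/-- Suppose `L = J(P)` is simple, some rank `i0` has `ρ_L(i0) ≥ 4` while all other
middle ranks have `ρ_L(i) = 2`, and `P` contains a subposet isomorphic to the
disjoint union of two 3-element chains.  Then `ρ_L(i0−1) ≥ 3` or `ρ_L(i0+1) ≥ 3`,
a contradiction: no such `L` exists. -/
theorem stmt_15 {P : Type*} [PartialOrder P] [Fintype P] [DecidableEq P]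
    (hd : 2 ≤ Fintype.card P)
    (hsimple : ∀ i, 1 ≤ i → i ≤ Fintype.card P - 1 → 2 ≤ rho P i)
    (i0 : ℕ) (hi0l : 1 ≤ i0) (hi0r : i0 ≤ Fintype.card P - 1)
    (h4 : 4 ≤ rho P i0)
    (h2 : ∀ i, 1 ≤ i → i ≤ Fintype.card P - 1 → i ≠ i0 → rho P i = 2)
    (a : Fin 6 → P) (hinj : Function.Injective a)
    (hchain1 : a 0 < a 1 ∧ a 1 < a 2) (hchain2 : a 3 < a 4 ∧ a 4 < a 5)
    (hincomp : ∀ i j : Fin 6, i ≤ 2 → 3 ≤ j → ¬ a i ≤ a j ∧ ¬ a j ≤ a i) :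
    (3 ≤ rho P (i0 - 1) ∨ 3 ≤ rho P (i0 + 1)) ∧ False := by
  classical
  obtain ⟨h01, h12⟩ := hchain1
  obtain ⟨h34, h45⟩ := hchain2
  have h02 : a 0 < a 2 := h01.trans h12
  have h35 : a 3 < a 5 := h34.trans h45
  have n10 : ¬ a 1 ≤ a 0 := h01.not_ge
  have n21 : ¬ a 2 ≤ a 1 := h12.not_ge
  have n20 : ¬ a 2 ≤ a 0 := h02.not_ge
  have n43 : ¬ a 4 ≤ a 3 := h34.not_ge
  have n54 : ¬ a 5 ≤ a 4 := h45.not_ge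
  have n53 : ¬ a 5 ≤ a 3 := h35.not_ge
  set ds : P → Finset P := fun s => Finset.univ.filter (fun x => x ≤ s) with hds
  have memds : ∀ x s : P, x ∈ ds s ↔ x ≤ s := by
    intro x s; simp [hds]
  have dslower : ∀ s : P, IsLowerSet ((ds s : Finset P) : Set P) := by
    intro s b c hbc hc
    simp only [Finset.mem_coe, memds] at hc ⊢
    exact hbc.trans hc
  have ulower : ∀ s t : P, IsLowerSet (((ds s ∪ ds t) : Finset P) : Set P) := by
    intro s t
    rw [Finset.coe_union]
    exact (dslower s).union (dslower t)
  set E1 : Finset P := ds (a 1) with hE1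
  set E2 : Finset P := ds (a 0) ∪ ds (a 3) with hE2
  set E3 : Finset P := ds (a 4) with hE3
  set F1 : Finset P := ds (a 2) ∪ ds (a 3) with hF1
  set F2 : Finset P := ds (a 1) ∪ ds (a 4) with hF2
  set F3 : Finset P := ds (a 0) ∪ ds (a 5) with hF3
  -- memberships
  have memE2 : ∀ x, x ∈ E2 ↔ (x ≤ a 0 ∨ x ≤ a 3) := by
    intro x; rw [hE2, Finset.mem_union, memds, memds]
  have memF1 : ∀ x, x ∈ F1 ↔ (x ≤ a 2 ∨ x ≤ a 3) := by
    intro x; rw [hF1, Finset.mem_union, memds, memds]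
  have memF2 : ∀ x, x ∈ F2 ↔ (x ≤ a 1 ∨ x ≤ a 4) := by
    intro x; rw [hF2, Finset.mem_union, memds, memds]
  have memF3 : ∀ x, x ∈ F3 ↔ (x ≤ a 0 ∨ x ≤ a 5) := by
    intro x; rw [hF3, Finset.mem_union, memds, memds]
  -- incomparabilities among E's
  have nE1E2 : ¬ E1 ⊆ E2 := by
    intro h
    rcases (memE2 _).mp (h ((memds (a 1) (a 1)).mpr le_rfl)) with h' | h'
    · exact n10 h'
    · exact (hincomp 1 3 (by decide) (by decide)).1 h'
  have nE2E1 : ¬ E2 ⊆ E1 := by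
    intro h
    exact (hincomp 1 3 (by decide) (by decide)).2
      ((memds _ _).mp (h ((memE2 (a 3)).mpr (Or.inr le_rfl))))
  have nE1E3 : ¬ E1 ⊆ E3 := by
    intro h
    exact (hincomp 1 4 (by decide) (by decide)).1
      ((memds _ _).mp (h ((memds (a 1) (a 1)).mpr le_rfl)))
  have nE3E1 : ¬ E3 ⊆ E1 := by
    intro h
    exact (hincomp 1 4 (by decide) (by decide)).2
      ((memds _ _).mp (h ((memds (a 4) (a 4)).mpr le_rfl)))
  have nE2E3 : ¬ E2 ⊆ E3 := by
    intro h
    exact (hincomp 0 4 (by decide) (by decide)).1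
      ((memds _ _).mp (h ((memE2 (a 0)).mpr (Or.inl le_rfl))))
  have nE3E2 : ¬ E3 ⊆ E2 := by
    intro h
    rcases (memE2 _).mp (h ((memds (a 4) (a 4)).mpr le_rfl)) with h' | h'
    · exact (hincomp 0 4 (by decide) (by decide)).2 h'
    · exact n43 h'
  -- incomparabilities among F's
  have nF1F2 : ¬ F1 ⊆ F2 := by
    intro h
    rcases (memF2 _).mp (h ((memF1 (a 2)).mpr (Or.inl le_rfl))) with h' | h'
    · exact n21 h'
    · exact (hincomp 2 4 (by decide) (by decide)).1 h'
  have nF2F1 : ¬ F2 ⊆ F1 := by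
    intro h
    rcases (memF1 _).mp (h ((memF2 (a 4)).mpr (Or.inr le_rfl))) with h' | h'
    · exact (hincomp 2 4 (by decide) (by decide)).2 h'
    · exact n43 h'
  have nF1F3 : ¬ F1 ⊆ F3 := by
    intro h
    rcases (memF3 _).mp (h ((memF1 (a 2)).mpr (Or.inl le_rfl))) with h' | h'
    · exact n20 h'
    · exact (hincomp 2 5 (by decide) (by decide)).1 h'
  have nF3F1 : ¬ F3 ⊆ F1 := by
    intro h
    rcases (memF1 _).mp (h ((memF3 (a 5)).mpr (Or.inr le_rfl))) with h' | h'
    · exact (hincomp 2 5 (by decide) (by decide)).2 h'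
    · exact n53 h'
  have nF2F3 : ¬ F2 ⊆ F3 := by
    intro h
    rcases (memF3 _).mp (h ((memF2 (a 1)).mpr (Or.inl le_rfl))) with h' | h'
    · exact n10 h'
    · exact (hincomp 1 5 (by decide) (by decide)).1 h'
  have nF3F2 : ¬ F3 ⊆ F2 := by
    intro h
    rcases (memF2 _).mp (h ((memF3 (a 5)).mpr (Or.inr le_rfl))) with h' | h'
    · exact (hincomp 1 5 (by decide) (by decide)).2 h'
    · exact n54 h'
  -- strict containments and card inequalities
  have c11 : E1.card < F1.card := by
    apply Finset.card_lt_card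
    refine (Finset.ssubset_iff_of_subset ?_).mpr ⟨a 2, (memF1 _).mpr (Or.inl le_rfl), ?_⟩
    · intro x hx
      exact (memF1 x).mpr (Or.inl (((memds x (a 1)).mp hx).trans h12.le))
    · rw [memds]; exact n21
  have c21 : E2.card < F1.card := by
    apply Finset.card_lt_card
    refine (Finset.ssubset_iff_of_subset ?_).mpr ⟨a 2, (memF1 _).mpr (Or.inl le_rfl), ?_⟩
    · intro x hx
      rcases (memE2 x).mp hx with h' | h'
      · exact (memF1 x).mpr (Or.inl (h'.trans h02.le))
      · exact (memF1 x).mpr (Or.inr h')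
    · rw [memE2]
      rintro (h' | h')
      · exact n20 h'
      · exact (hincomp 2 3 (by decide) (by decide)).1 h'
  have c12 : E1.card < F2.card := by
    apply Finset.card_lt_card
    refine (Finset.ssubset_iff_of_subset ?_).mpr ⟨a 4, (memF2 _).mpr (Or.inr le_rfl), ?_⟩
    · intro x hx
      exact (memF2 x).mpr (Or.inl ((memds x (a 1)).mp hx))
    · rw [memds]; exact (hincomp 1 4 (by decide) (by decide)).2
  have c22 : E2.card < F2.card := by
    apply Finset.card_lt_card
    refine (Finset.ssubset_iff_of_subset ?_).mpr ⟨a 1, (memF2 _).mpr (Or.inl le_rfl), ?_⟩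
    · intro x hx
      rcases (memE2 x).mp hx with h' | h'
      · exact (memF2 x).mpr (Or.inl (h'.trans h01.le))
      · exact (memF2 x).mpr (Or.inr (h'.trans h34.le))
    · rw [memE2]
      rintro (h' | h')
      · exact n10 h'
      · exact (hincomp 1 3 (by decide) (by decide)).1 h'
  have c23 : E2.card < F3.card := by
    apply Finset.card_lt_card
    refine (Finset.ssubset_iff_of_subset ?_).mpr ⟨a 5, (memF3 _).mpr (Or.inr le_rfl), ?_⟩
    · intro x hx
      rcases (memE2 x).mp hx with h' | h'
      · exact (memF3 x).mpr (Or.inl h')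
      · exact (memF3 x).mpr (Or.inr (h'.trans h35.le))
    · rw [memE2]
      rintro (h' | h')
      · exact (hincomp 0 5 (by decide) (by decide)).2 h'
      · exact n53 h'
  have c33 : E3.card < F3.card := by
    apply Finset.card_lt_card
    refine (Finset.ssubset_iff_of_subset ?_).mpr ⟨a 0, (memF3 _).mpr (Or.inl le_rfl), ?_⟩
    · intro x hx
      exact (memF3 x).mpr (Or.inr (((memds x (a 4)).mp hx).trans h45.le))
    · rw [memds]; exact (hincomp 0 4 (by decide) (by decide)).1
  -- apply Lemma M twice
  have hE := lemmaM i0 h2 E1 E2 E3 (dslower _) (ulower _ _) (dslower _)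
    nE1E2 nE2E1 nE1E3 nE3E1 nE2E3 nE3E2
  have hF := lemmaM i0 h2 F1 F2 F3 (ulower _ _) (ulower _ _) (ulower _ _)
    nF1F2 nF2F1 nF1F3 nF3F1 nF2F3 nF3F2
  have hFalse : False := by
    rcases hE with ⟨g1, g2⟩ | ⟨g1, g2⟩ | ⟨g1, g2⟩ <;>
      rcases hF with ⟨k1, k2⟩ | ⟨k1, k2⟩ | ⟨k1, k2⟩ <;> omega
  exact ⟨hFalse.elim, hFalse⟩
end
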